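/- Let A, B be n×n complex matrices with (A,B) of maximal rank, U a unitary matrix leaving Ker A and Ker B invariant, and suppose AUA⋆y = BUB⋆y for all y in Ran A ∩ Ran B. Then the matrix C = (AUA⋆ + BUB⋆)(P_A + P_B)^{-1} satisfies AUA⋆ = C·P_A and BUB⋆ = C·P_B. -/

import Mathlib

open Matrix

/-- `X` satisfies the four Penrose conditions for `A`. -/
def IsMoorePenrose {n : ℕ} (A X : Matrix (Fin n) (Fin n) ℂ) : Prop :=
  A * X * A = A ∧ X * A * X = X ∧ (A * X)ᴴ = A * X ∧ (X * A)ᴴ = X * A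

/-- Two matrices with the same action on vectors are equal. -/
lemma ext_of_mulVec_eq {n : ℕ} {M N : Matrix (Fin n) (Fin n) ℂ}
    (h : ∀ x, M.mulVec x = N.mulVec x) : M = N := by
  ext i j
  have := congrFun (h (Pi.single j 1)) i
  simpa using this

/-- A hermitian idempotent matrix equals another hermitian idempotent with the same range. -/
lemma herm_idem_unique {n : ℕ} {P Q : Matrix (Fin n) (Fin n) ℂ}
    (hP : P.IsHermitian) (hPi : P * P = P) (hQ : Q.IsHermitian) (hQi : Q * Q = Q)
    (hr : LinearMap.range P.mulVecLin = LinearMap.range Q.mulVecLin) : P = Q := by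
  have key : ∀ (R S : Matrix (Fin n) (Fin n) ℂ), S * S = S →
      LinearMap.range R.mulVecLin = LinearMap.range S.mulVecLin → S * R = R := by
    intro R S hSi hrr
    apply ext_of_mulVec_eq
    intro x
    have hx : R.mulVec x ∈ LinearMap.range S.mulVecLin := by
      rw [← hrr]; exact ⟨x, rfl⟩
    obtain ⟨y, hy⟩ := hx
    simp only [mulVecLin_apply] at hy
    rw [← mulVec_mulVec, ← hy, mulVec_mulVec, hSi, hy]
  have h1 : Q * P = P := key P Q hQi hr
  have h2 : P * Q = Q := key Q P hPi hr.symm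
  calc P = Pᴴ := hP.symm
    _ = (Q * P)ᴴ := by rw [h1]
    _ = Pᴴ * Qᴴ := by rw [conjTranspose_mul]
    _ = P * Q := by rw [hP.eq, hQ.eq]
    _ = Q := h2

/-- The range of `A * A⋆` is the range of `A`. -/
lemma range_mul_pinv {n : ℕ} {A Astar : Matrix (Fin n) (Fin n) ℂ}
    (hMPA : IsMoorePenrose A Astar) :
    LinearMap.range (A * Astar).mulVecLin = LinearMap.range A.mulVecLin := by
  apply le_antisymm
  · rintro _ ⟨x, rfl⟩
    exact ⟨Astar.mulVec x, by simp [mulVecLin_apply, mulVec_mulVec]⟩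
  · rintro _ ⟨x, rfl⟩
    refine ⟨A.mulVec x, ?_⟩
    simp only [mulVecLin_apply, mulVec_mulVec]
    rw [hMPA.1]

/-- If `(A,B)` has maximal rank, `U` is unitary leaving the kernels invariant and
`AUA⋆y = BUB⋆y` for all `y ∈ Ran A ∩ Ran B`, then
`C = (AUA⋆ + BUB⋆)(P_A + P_B)⁻¹` satisfies `AUA⋆ = C P_A` and `BUB⋆ = C P_B`. -/
theorem stmt_7 (n : ℕ) (A B Astar Bstar U PA PB : Matrix (Fin n) (Fin n) ℂ)
    (hrank : (Matrix.fromCols A B).rank = n)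
    (hMPA : IsMoorePenrose A Astar) (hMPB : IsMoorePenrose B Bstar)
    (hU : U ∈ Matrix.unitaryGroup (Fin n) ℂ)
    (hkerA : (LinearMap.ker A.mulVecLin).map U.mulVecLin ≤ LinearMap.ker A.mulVecLin)
    (hkerB : (LinearMap.ker B.mulVecLin).map U.mulVecLin ≤ LinearMap.ker B.mulVecLin)
    (hPAherm : PA.IsHermitian) (hPAidem : PA * PA = PA)
    (hPArange : LinearMap.range PA.mulVecLin = LinearMap.range A.mulVecLin)
    (hPBherm : PB.IsHermitian) (hPBidem : PB * PB = PB)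
    (hPBrange : LinearMap.range PB.mulVecLin = LinearMap.range B.mulVecLin)
    (hPinv : IsUnit (PA + PB))
    (hcompat : ∀ y ∈ LinearMap.range A.mulVecLin ⊓ LinearMap.range B.mulVecLin,
      (A * U * Astar).mulVec y = (B * U * Bstar).mulVec y) :
    A * U * Astar = (A * U * Astar + B * U * Bstar) * (PA + PB)⁻¹ * PA ∧
      B * U * Bstar = (A * U * Astar + B * U * Bstar) * (PA + PB)⁻¹ * PB := by
  -- PA = A * Astar and PB = B * Bstar by uniqueness of orthogonal projections
  have hAA : PA = A * Astar := by
    refine herm_idem_unique hPAherm hPAidem hMPA.2.2.1 ?_ ?_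
    · rw [← mul_assoc, hMPA.1]
    · rw [hPArange, range_mul_pinv hMPA]
  have hBB : PB = B * Bstar := by
    refine herm_idem_unique hPBherm hPBidem hMPB.2.2.1 ?_ ?_
    · rw [← mul_assoc, hMPB.1]
    · rw [hPBrange, range_mul_pinv hMPB]
  -- AUA⋆ PA = AUA⋆ and BUB⋆ PB = BUB⋆
  have hAPA : A * U * Astar * PA = A * U * Astar := by
    rw [hAA, mul_assoc (A * U), ← mul_assoc Astar, hMPA.2.1]
  have hBPB : B * U * Bstar * PB = B * U * Bstar := by
    rw [hBB, mul_assoc (B * U), ← mul_assoc Bstar, hMPB.2.1]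
  -- inverse facts
  have hdet : IsUnit (PA + PB).det := (Matrix.isUnit_iff_isUnit_det _).mp hPinv
  have h1 : (PA + PB) * (PA + PB)⁻¹ = 1 := Matrix.mul_nonsing_inv _ hdet
  have h2 : (PA + PB)⁻¹ * (PA + PB) = 1 := Matrix.nonsing_inv_mul _ hdet
  set S := A * U * Astar + B * U * Bstar with hS
  -- main computation for the first identity
  have g1 : S * (PA + PB)⁻¹ * PA = A * U * Astar := by
    apply ext_of_mulVec_eq
    intro x
    obtain ⟨w, hw⟩ : ∃ w, w = (PA + PB)⁻¹.mulVec (PA.mulVec x) := ⟨_, rfl⟩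
    have hTw : (PA + PB).mulVec w = PA.mulVec x := by
      rw [hw, mulVec_mulVec, h1, one_mulVec]
    have hsplit : PA.mulVec w + PB.mulVec w = PA.mulVec x := by
      rw [← add_mulVec, hTw]
    have hyA : PB.mulVec w ∈ LinearMap.range A.mulVecLin := by
      rw [← hPArange]
      refine ⟨x - w, ?_⟩
      simp only [mulVecLin_apply, mulVec_sub]
      rw [← hsplit]; abel
    have hyB : PB.mulVec w ∈ LinearMap.range B.mulVecLin := by
      rw [← hPBrange]; exact ⟨w, rfl⟩
    have hcomp := hcompat _ ⟨hyA, hyB⟩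
    have lhs1 : (S * (PA + PB)⁻¹ * PA).mulVec x = S.mulVec w := by
      rw [hw, mulVec_mulVec, mulVec_mulVec]
    rw [lhs1, hS, add_mulVec]
    have eA : (A * U * Astar).mulVec w = (A * U * Astar).mulVec (PA.mulVec w) := by
      rw [mulVec_mulVec, hAPA]
    have eB : (B * U * Bstar).mulVec w = (B * U * Bstar).mulVec (PB.mulVec w) := by
      rw [mulVec_mulVec, hBPB]
    rw [eA, eB, ← hcomp, ← mulVec_add, hsplit, mulVec_mulVec, hAPA]
  have hsum : S * (PA + PB)⁻¹ * PA + S * (PA + PB)⁻¹ * PB = S := by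
    rw [← mul_add, mul_assoc, h2, mul_one]
  have g2 : S * (PA + PB)⁻¹ * PB = B * U * Bstar := by
    have h3 : S * (PA + PB)⁻¹ * PB = S - S * (PA + PB)⁻¹ * PA := eq_sub_of_add_eq' hsum
    rw [h3, g1, hS, add_sub_cancel_left]
  exact ⟨g1.symm, g2.symm⟩
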